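/- For a cd-word w of degree n, the element Θ_w = Σ_{S ∈ b[I^w]} 2^{|S|+1} M_S expressed in the basis F_T = Σ_{R ⊇ T} M_R equals 2^{|w|_d + 1} Σ_{T : T, [n]\T ∈ b[I^w]} F_T, where |w|_d is the number of d's in w. -/
import Mathlib


/-- The degree of a cd-word (`false` = c, degree 1; `true` = d, degree 2). -/
def degw (w : List Bool) : ℕ := (w.map (fun b => if b then 2 else 1)).sum

/-- The left sparse set `S_w` of a cd-word: degrees of prefixes ending at each d. -/
def Sw (w : List Bool) : Finset ℕ :=
  ((Finset.range w.length).filter (fun j => w.getD j false = true)).image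
    (fun j => degw (w.take (j + 1)))




lemma degw_append (l1 l2 : List Bool) : degw (l1 ++ l2) = degw l1 + degw l2 := by
  simp [degw]

lemma degw_take_le (l : List Bool) (a : ℕ) : degw (l.take a) ≤ degw l := by
  conv_rhs => rw [← List.take_append_drop a l]
  rw [degw_append]; omega

lemma degw_take_mono (l : List Bool) {a b : ℕ} (h : a ≤ b) :
    degw (l.take a) ≤ degw (l.take b) := by
  rw [show l.take a = (l.take b).take a by rw [List.take_take, min_eq_left h]]
  exact degw_take_le _ _

lemma degw_take_succ (l : List Bool) {j : ℕ} (hj : j < l.length)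
    (hd : l.getD j false = true) :
    degw (l.take (j+1)) = degw (l.take j) + 2 := by
  rw [List.take_succ, degw_append]
  have : l[j]? = some true := by
    rw [List.getElem?_eq_getElem hj]
    simpa [List.getD, List.getElem?_eq_getElem hj] using hd
  simp [this, degw]

lemma mem_Sw {w : List Bool} {i : ℕ} :
    i ∈ Sw w ↔ ∃ j, j < w.length ∧ w.getD j false = true ∧ degw (w.take (j+1)) = i := by
  constructor
  · intro h
    simp only [Sw, Finset.mem_image, Finset.mem_filter, Finset.mem_range] at h
    obtain ⟨j, ⟨h1, h2⟩, h3⟩ := h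
    exact ⟨j, h1, h2, h3⟩
  · rintro ⟨j, h1, h2, h3⟩
    simp only [Sw, Finset.mem_image, Finset.mem_filter, Finset.mem_range]
    exact ⟨j, ⟨h1, h2⟩, h3⟩

lemma Sw_bounds {w : List Bool} {i : ℕ} (hi : i ∈ Sw w) : 2 ≤ i ∧ i ≤ degw w := by
  obtain ⟨j, hj, hd, hv⟩ := mem_Sw.1 hi
  have h2 := degw_take_succ w hj hd
  have h3 : degw (w.take (j+1)) ≤ degw w := degw_take_le _ _
  omega

lemma Sw_gap {w : List Bool} {i j : ℕ} (hi : i ∈ Sw w) (hj : j ∈ Sw w) (hij : i < j) :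
    i + 1 < j := by
  obtain ⟨a, ha, hda, hva⟩ := mem_Sw.1 hi
  obtain ⟨b, hb, hdb, hvb⟩ := mem_Sw.1 hj
  rcases lt_trichotomy a b with h | h | h
  · have h1 : degw (w.take (a+1)) ≤ degw (w.take b) := degw_take_mono w h
    have h2 := degw_take_succ w hb hdb
    omega
  · subst h
    omega
  · have h1 : degw (w.take (b+1)) ≤ degw (w.take a) := degw_take_mono w h
    have h2 := degw_take_succ w ha hda
    have h3 : degw (w.take a) ≤ degw (w.take (a+1)) := degw_take_mono w (Nat.le_succ a)
    omega

lemma Sw_card (w : List Bool) : (Sw w).card = w.count true := by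
  rw [Sw, Finset.card_image_of_injOn]
  · induction w using List.reverseRecOn with
    | nil => simp
    | append_singleton l b ih =>
      rw [List.length_append, List.length_singleton, Finset.range_add_one, Finset.filter_insert]
      have hgd : ∀ j < l.length, (l ++ [b]).getD j false = l.getD j false := fun j hj =>
        List.getD_append l [b] false j hj
      have hfeq : (Finset.range l.length).filter (fun j => (l ++ [b]).getD j false = true)
          = (Finset.range l.length).filter (fun j => l.getD j false = true) := by
        apply Finset.filter_congr
        intro j hj
        simp only [Finset.mem_range] at hj
        rw [hgd j hj]
      have hlast : (l ++ [b]).getD l.length false = b := by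
        rw [List.getD_append_right l [b] false l.length le_rfl]
        simp [List.getD]
      rw [List.count_append, List.count_singleton']
      by_cases hbt : b = true
      · rw [if_pos (by rw [hlast, hbt]), Finset.card_insert_of_notMem (by simp), hfeq, ih, hbt]
        simp
      · rw [if_neg (by rw [hlast]; exact hbt), hfeq, ih]
        simp [hbt]
  · intro a ha b hb hab
    simp only [Finset.coe_filter, Set.mem_setOf_eq, Finset.mem_range] at ha hb
    have hab' : degw (w.take (a+1)) = degw (w.take (b+1)) := hab
    by_contra hne
    rcases Nat.lt_or_ge a b with h | h
    · have h1 : degw (w.take (a+1)) ≤ degw (w.take b) := degw_take_mono w h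
      have h2 := degw_take_succ w hb.1 hb.2
      omega
    · have h : b < a := by omega
      have h1 : degw (w.take (b+1)) ≤ degw (w.take a) := degw_take_mono w h
      have h2 := degw_take_succ w ha.1 ha.2
      have h3 : degw (w.take a) ≤ degw (w.take (a+1)) := degw_take_mono w (Nat.le_succ a)
      omega


def good (A T : Finset ℕ) : Prop :=
  (∀ i ∈ A, i - 1 ∈ T ∨ i ∈ T) ∧ ∀ i ∈ A, ¬(i - 1 ∈ T ∧ i ∈ T)

instance (A T : Finset ℕ) : Decidable (good A T) := by
  unfold good; infer_instance

lemma count_lemma (A : Finset ℕ) :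
    (∀ i ∈ A, 2 ≤ i) → (∀ i ∈ A, ∀ j ∈ A, i < j → i + 1 < j) →
    ∀ S : Finset ℕ,
    (S.powerset.filter (fun T => good A T)).card * 2 ^ A.card
      = if ∀ i ∈ A, i - 1 ∈ S ∨ i ∈ S then 2 ^ S.card else 0 := by
  classical
  induction A using Finset.induction_on with
  | empty => intro _ _ S; simp [good]
  | @insert a A ha ih =>
    intro h2 hgap S
    have ha2 : 2 ≤ a := h2 a (Finset.mem_insert_self a A)
    have h2' : ∀ i ∈ A, 2 ≤ i := fun i hi => h2 i (Finset.mem_insert_of_mem hi)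
    have hgap' : ∀ i ∈ A, ∀ j ∈ A, i < j → i + 1 < j :=
      fun i hi j hj => hgap i (Finset.mem_insert_of_mem hi) j (Finset.mem_insert_of_mem hj)
    have hsep : ∀ i ∈ A, i - 1 ≠ a - 1 ∧ i - 1 ≠ a ∧ i ≠ a - 1 ∧ i ≠ a := by
      intro i hi
      have hia : i ≠ a := fun h => ha (h ▸ hi)
      have hi2 := h2' i hi
      rcases Nat.lt_or_ge i a with h | h
      · have := hgap i (Finset.mem_insert_of_mem hi) a (Finset.mem_insert_self a A) h
        omega
      · have hlt : a < i := by omega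
        have := hgap a (Finset.mem_insert_self a A) i (Finset.mem_insert_of_mem hi) hlt
        omega
    set P : Finset ℕ := {a - 1, a} with hPdef
    have hmemP : ∀ x, x ∈ P ↔ x = a - 1 ∨ x = a := by intro x; simp [hPdef]
    have hane : a - 1 ≠ a := by omega
    have hcard : (S.powerset.filter (fun T => good (insert a A) T)).card
        = ((Finset.powersetCard 1 (S ∩ P)) ×ˢ
            ((S \ P).powerset.filter (fun T => good A T))).card := by
      refine Finset.card_bij' (fun T _ => (T ∩ P, T \ P)) (fun p _ => p.1 ∪ p.2) ?_ ?_ ?_ ?_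
      · intro T hT
        simp only [Finset.mem_filter, Finset.mem_powerset] at hT
        obtain ⟨hTS, hg1, hg2⟩ := hT
        have hga1 := hg1 a (Finset.mem_insert_self a A)
        have hga2 := hg2 a (Finset.mem_insert_self a A)
        rw [Finset.mem_product]
        constructor
        · rw [Finset.mem_powersetCard]
          refine ⟨Finset.inter_subset_inter hTS (Finset.Subset.refl P), ?_⟩
          have hTP : T ∩ P = {a - 1} ∨ T ∩ P = {a} := by
            rcases hga1 with h | h
            · left
              ext x
              simp only [Finset.mem_inter, hmemP, Finset.mem_singleton]
              constructor
              · rintro ⟨hxT, rfl | rfl⟩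
                · rfl
                · exact absurd ⟨h, hxT⟩ hga2
              · rintro rfl; exact ⟨h, Or.inl rfl⟩
            · right
              ext x
              simp only [Finset.mem_inter, hmemP, Finset.mem_singleton]
              constructor
              · rintro ⟨hxT, rfl | rfl⟩
                · exact absurd ⟨hxT, h⟩ hga2
                · rfl
              · rintro rfl; exact ⟨h, Or.inr rfl⟩
          rcases hTP with h | h <;> simp [h]
        · simp only [Finset.mem_filter, Finset.mem_powerset]
          refine ⟨Finset.sdiff_subset_sdiff hTS (Finset.Subset.refl P), ?_, ?_⟩
          · intro i hiA
            have hs := hsep i hiA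
            have hgi := hg1 i (Finset.mem_insert_of_mem hiA)
            simp only [Finset.mem_sdiff, hmemP]
            tauto
          · intro i hiA
            have hgi := hg2 i (Finset.mem_insert_of_mem hiA)
            simp only [Finset.mem_sdiff]
            tauto
      · intro p hp
        rw [Finset.mem_product] at hp
        obtain ⟨hp1, hp2⟩ := hp
        rw [Finset.mem_powersetCard] at hp1
        simp only [Finset.mem_filter, Finset.mem_powerset] at hp2
        obtain ⟨hp1s, hp1c⟩ := hp1
        obtain ⟨hp2s, hg1, hg2⟩ := hp2
        obtain ⟨y, hy⟩ := Finset.card_eq_one.1 hp1c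
        have hyP : y ∈ S ∩ P := hp1s (by simp [hy])
        have hyP' : y = a - 1 ∨ y = a := (hmemP y).1 (Finset.mem_inter.1 hyP).2
        have hnp2 : ∀ x ∈ p.2, x ∉ P := fun x hx =>
          (Finset.mem_sdiff.1 (hp2s hx)).2
        simp only [Finset.mem_filter, Finset.mem_powerset]
        refine ⟨Finset.union_subset (hp1s.trans Finset.inter_subset_left)
            (hp2s.trans (Finset.sdiff_subset)), ?_, ?_⟩
        · intro i hi
          rcases Finset.mem_insert.1 hi with rfl | hiA
          · rcases hyP' with rfl | rfl
            · left; exact Finset.mem_union_left _ (by simp [hy])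
            · right; exact Finset.mem_union_left _ (by simp [hy])
          · have hgi := hg1 i hiA
            rcases hgi with h | h
            · left; exact Finset.mem_union_right _ h
            · right; exact Finset.mem_union_right _ h
        · intro i hi
          rcases Finset.mem_insert.1 hi with rfl | hiA
          · rintro ⟨h1, h2⟩
            have hm1 : i - 1 ∈ p.1 := by
              rcases Finset.mem_union.1 h1 with h | h
              · exact h
              · exact absurd ((hmemP (i-1)).2 (Or.inl rfl)) (hnp2 _ h)
            have hm2 : i ∈ p.1 := by
              rcases Finset.mem_union.1 h2 with h | h
              · exact h
              · exact absurd ((hmemP i).2 (Or.inr rfl)) (hnp2 _ h)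
            rw [hy, Finset.mem_singleton] at hm1 hm2
            omega
          · have hgi := hg2 i hiA
            have hs := hsep i hiA
            rintro ⟨h1, h2⟩
            have hm1 : i - 1 ∈ p.2 := by
              rcases Finset.mem_union.1 h1 with h | h
              · rw [hy, Finset.mem_singleton] at h
                exfalso; rcases hyP' with rfl | rfl <;> omega
              · exact h
            have hm2 : i ∈ p.2 := by
              rcases Finset.mem_union.1 h2 with h | h
              · rw [hy, Finset.mem_singleton] at h
                exfalso; rcases hyP' with rfl | rfl <;> omega
              · exact h
            exact hgi ⟨hm1, hm2⟩
      · intro T hT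
        ext x
        simp only [Finset.mem_union, Finset.mem_inter, Finset.mem_sdiff]
        tauto
      · intro p hp
        rw [Finset.mem_product] at hp
        obtain ⟨hp1, hp2⟩ := hp
        rw [Finset.mem_powersetCard] at hp1
        simp only [Finset.mem_filter, Finset.mem_powerset] at hp2
        have hx1 : ∀ z ∈ p.1, z ∈ P := fun z hz => (Finset.mem_inter.1 (hp1.1 hz)).2
        have hx2 : ∀ z ∈ p.2, z ∉ P := fun z hz => (Finset.mem_sdiff.1 (hp2.1 hz)).2
        have e1 : (p.1 ∪ p.2) ∩ P = p.1 := by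
          ext x
          simp only [Finset.mem_inter, Finset.mem_union]
          constructor
          · rintro ⟨hx | hx, hxP⟩
            · exact hx
            · exact absurd hxP (hx2 x hx)
          · intro hx; exact ⟨Or.inl hx, hx1 x hx⟩
        have e2 : (p.1 ∪ p.2) \ P = p.2 := by
          ext x
          simp only [Finset.mem_sdiff, Finset.mem_union]
          constructor
          · rintro ⟨hx | hx, hxP⟩
            · exact absurd (hx1 x hx) hxP
            · exact hx
          · intro hx; exact ⟨Or.inr hx, hx2 x hx⟩
        exact Prod.ext e1 e2
    rw [hcard, Finset.card_product, Finset.card_powersetCard, Nat.choose_one_right,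
      Finset.card_insert_of_notMem ha]
    simp only [Finset.forall_mem_insert]
    have hIH := ih h2' hgap' (S \ P)
    have hcondA : (∀ i ∈ A, i - 1 ∈ S \ P ∨ i ∈ S \ P) ↔ (∀ i ∈ A, i - 1 ∈ S ∨ i ∈ S) := by
      apply forall₂_congr
      intro i hi
      have hs := hsep i hi
      simp only [Finset.mem_sdiff, hmemP]
      tauto
    set N : ℕ := ((S \ P).powerset.filter (fun T => good A T)).card with hN
    by_cases hA : ∀ i ∈ A, i - 1 ∈ S ∨ i ∈ S
    · rw [if_pos (hcondA.2 hA)] at hIH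
      by_cases haS : a - 1 ∈ S ∨ a ∈ S
      · rw [if_pos ⟨haS, hA⟩]
        have hc_le : (S ∩ P).card ≤ S.card := Finset.card_le_card Finset.inter_subset_left
        have hPc : P.card ≤ 2 :=
          (Finset.card_insert_le _ _).trans (by simp)
        have hc_le2 : (S ∩ P).card ≤ 2 :=
          (Finset.card_le_card Finset.inter_subset_right).trans hPc
        have hc_pos : 1 ≤ (S ∩ P).card := by
          rw [Nat.one_le_iff_ne_zero, ← Nat.pos_iff_ne_zero, Finset.card_pos]
          rcases haS with h | h
          · exact ⟨a - 1, Finset.mem_inter.2 ⟨h, (hmemP _).2 (Or.inl rfl)⟩⟩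
          · exact ⟨a, Finset.mem_inter.2 ⟨h, (hmemP _).2 (Or.inr rfl)⟩⟩
        have hScard : (S \ P).card = S.card - (S ∩ P).card := by
          rw [show S \ P = S \ (S ∩ P) by
            ext x; simp only [Finset.mem_sdiff, Finset.mem_inter]; tauto,
            Finset.card_sdiff_of_subset Finset.inter_subset_left]
        rw [hScard] at hIH
        rw [pow_succ, ← mul_assoc, mul_assoc ((S ∩ P).card) N, hIH]
        set c := (S ∩ P).card
        set m := S.card
        interval_cases c
        · rw [one_mul, ← pow_succ]
          congr 1
          omega
        · have h4 : (2:ℕ) ^ m = 2 ^ (m - 2) * 2 ^ 2 := by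
            rw [← pow_add]
            congr 1
            omega
          rw [h4]; ring
      · rw [if_neg (by tauto)]
        have hSP : S ∩ P = ∅ := by
          ext x
          simp only [Finset.mem_inter, hmemP, Finset.notMem_empty, iff_false]
          push_neg at haS
          rintro ⟨hxS, rfl | rfl⟩ <;> tauto
        simp [hSP]
    · rw [if_neg (by tauto)]
      rw [if_neg (fun h => hA (hcondA.1 h))] at hIH
      have hN0 : N = 0 := by
        rcases Nat.mul_eq_zero.1 hIH with h | h
        · exact h
        · exact absurd h (pow_ne_zero _ two_ne_zero)
      simp [hN0]

/-- `T ∈ b[I^w]`: `T` meets every interval `{i-1, i}` with `i ∈ S_w`. -/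
def blocks (w : List Bool) (T : Finset ℕ) : Prop := ∀ i ∈ Sw w, i - 1 ∈ T ∨ i ∈ T

instance (w : List Bool) (T : Finset ℕ) : Decidable (blocks w T) := by
  unfold blocks; infer_instance

/-- The monomial basis element `M_S`. -/
noncomputable def MM (S : Finset ℕ) : Finset ℕ →₀ ℚ := Finsupp.single S 1

/-- `F_T = Σ_{R ⊇ T, R ⊆ [n]} M_R`. -/
noncomputable def FF (n : ℕ) (T : Finset ℕ) : Finset ℕ →₀ ℚ :=
  ∑ R ∈ (Finset.Icc 1 n).powerset.filter (fun R => T ⊆ R), MM R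

/-- for a cd-word `w` of degree `n`,
`Θ_w = Σ_{S ∈ b[I^w]} 2^{|S|+1} M_S = 2^{|w|_d + 1} Σ_{T, [n]\T ∈ b[I^w]} F_T`. -/
theorem stmt_12 (n : ℕ) (w : List Bool) (hw : degw w = n) :
    ∑ S ∈ (Finset.Icc 1 n).powerset.filter (fun S => blocks w S),
        (2 : ℚ) ^ (S.card + 1) • MM S
      = (2 : ℚ) ^ (w.count true + 1) •
          ∑ T ∈ (Finset.Icc 1 n).powerset.filter
              (fun T => blocks w T ∧ blocks w (Finset.Icc 1 n \ T)), FF n T := by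
  classical
  subst hw
  ext S₀
  simp only [Finsupp.finset_sum_apply, Finsupp.smul_apply, MM, FF, Finsupp.single_apply,
    smul_eq_mul, mul_ite, mul_one, mul_zero, Finset.sum_ite_eq']
  by_cases hS : S₀ ⊆ Finset.Icc 1 (degw w)
  · have hmemL : (S₀ ∈ (Finset.Icc 1 (degw w)).powerset.filter (fun S => blocks w S))
        ↔ blocks w S₀ := by
      simp [Finset.mem_filter, Finset.mem_powerset, hS]
    have hmemR : ∀ T : Finset ℕ,
        (S₀ ∈ (Finset.Icc 1 (degw w)).powerset.filter (fun R => T ⊆ R)) ↔ T ⊆ S₀ := by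
      intro T
      simp [Finset.mem_filter, Finset.mem_powerset, hS]
    simp only [hmemL, hmemR, Finset.sum_boole]
    have hset : ((Finset.Icc 1 (degw w)).powerset.filter
          (fun T => blocks w T ∧ blocks w (Finset.Icc 1 (degw w) \ T))).filter
            (fun T => T ⊆ S₀)
        = S₀.powerset.filter (fun T => good (Sw w) T) := by
      ext T
      simp only [Finset.mem_filter, Finset.mem_powerset]
      constructor
      · rintro ⟨⟨hTIcc, hb1, hb2⟩, hTS⟩
        refine ⟨hTS, hb1, ?_⟩
        intro i hi
        rcases hb2 i hi with h | h <;> rw [Finset.mem_sdiff] at h <;> tauto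
      · rintro ⟨hTS, hg1, hg2⟩
        refine ⟨⟨hTS.trans hS, hg1, ?_⟩, hTS⟩
        intro i hi
        have hb := Sw_bounds hi
        have hg := hg2 i hi
        have hi1 : i - 1 ∈ Finset.Icc 1 (degw w) := by
          rw [Finset.mem_Icc]; omega
        have hi2 : i ∈ Finset.Icc 1 (degw w) := by
          rw [Finset.mem_Icc]; omega
        by_cases hT1 : i - 1 ∈ T
        · right
          rw [Finset.mem_sdiff]
          exact ⟨hi2, fun hT2 => hg ⟨hT1, hT2⟩⟩
        · left
          rw [Finset.mem_sdiff]
          exact ⟨hi1, hT1⟩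
    rw [hset]
    have key := count_lemma (Sw w) (fun i hi => (Sw_bounds hi).1)
      (fun i hi j hj hij => Sw_gap hi hj hij) S₀
    rw [Sw_card] at key
    have keyQ : ((S₀.powerset.filter (fun T => good (Sw w) T)).card : ℚ) * 2 ^ (w.count true)
        = if blocks w S₀ then 2 ^ S₀.card else 0 := by
      by_cases hb : ∀ i ∈ Sw w, i - 1 ∈ S₀ ∨ i ∈ S₀
      · rw [if_pos hb] at key
        rw [if_pos (show blocks w S₀ from hb)]
        exact_mod_cast key
      · rw [if_neg hb] at key
        rw [if_neg (show ¬blocks w S₀ from hb)]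
        exact_mod_cast key
    rw [show ((2:ℚ) ^ (w.count true + 1)) = 2 * 2 ^ (w.count true) from by ring]
    rw [mul_assoc, mul_comm ((2:ℚ) ^ (w.count true)), keyQ]
    by_cases hb : blocks w S₀
    · rw [if_pos hb, if_pos hb]
      ring
    · rw [if_neg hb, if_neg hb]
      ring
  · have h0 : S₀ ∉ (Finset.Icc 1 (degw w)).powerset.filter (fun S => blocks w S) := by
      intro hmem
      exact hS (Finset.mem_powerset.1 (Finset.mem_filter.1 hmem).1)
    have h1 : ∀ T : Finset ℕ,
        S₀ ∉ (Finset.Icc 1 (degw w)).powerset.filter (fun R => T ⊆ R) := by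
      intro T hmem
      exact hS (Finset.mem_powerset.1 (Finset.mem_filter.1 hmem).1)
    rw [if_neg h0]
    rw [Finset.sum_congr rfl (fun T _ => if_neg (h1 T))]
    simp
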